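/- A form p ∈ ℂ[x₁,…,xₙ] of degree 3r can be written as p = f₁³ + f₂³ with f₁, f₂ non-proportional forms of degree r if and only if p = g₁g₂g₃ where g₁, g₂, g₃ are pairwise non-proportional forms of degree r that are linearly dependent over ℂ. -/

import Mathlib

open MvPolynomial

noncomputable def om : ℂ := (-1 + Complex.I * Real.sqrt 3) / 2
lemma om_sq : om ^ 2 + om + 1 = 0 := by
  have hI : Complex.I ^ 2 = -1 := Complex.I_sq
  have hs : (Real.sqrt 3 : ℂ) ^ 2 = 3 := by
    norm_cast
    rw [Real.sq_sqrt (by norm_num : (3:ℝ) ≥ 0)]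
  unfold om
  field_simp
  linear_combination (3:ℂ) * hI + Complex.I ^ 2 * hs
lemma om_ne_one : om ≠ 1 := by
  intro h; have := om_sq; rw [h] at this; norm_num at this
lemma om_cube : om ^ 3 = 1 := by linear_combination (om - 1) * om_sq
lemma om_sq_ne_one : om ^ 2 ≠ 1 := by
  intro h
  have h2 : om = -2 := by linear_combination om_sq - h
  have := om_sq; rw [h2] at this; norm_num at this
lemma om_ne_om_sq : om ≠ om ^ 2 := by
  intro h
  have h2 : om = -(1:ℂ)/2 := by linear_combination om_sq/2 + h/2
  have := om_sq; rw [h2] at this; norm_num at this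

lemma cube_factor {R : Type*} [CommRing R] (w x y : R) (hw : w ^ 2 + w + 1 = 0) :
    x ^ 3 + y ^ 3 = (x + y) * (x + w * y) * (x + w ^ 2 * y) := by
  linear_combination (-(x ^ 2 * y) - w * x * y ^ 2 - (w - 1) * y ^ 3) * hw

lemma cube_key {R : Type*} [CommRing R] (w α β a g₁ g₂ : R) (hw : w ^ 3 = 1)
    (ha : a ^ 3 * (3 * (w - w ^ 2) * α * β) = 1) :
    (a * (w * α * g₁ - β * g₂)) ^ 3 + (a * (-(α * g₁) + w * β * g₂)) ^ 3
      = g₁ * g₂ * (α * g₁ + β * g₂) := by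
  linear_combination (g₁ * g₂ * (α * g₁ + β * g₂)) * ha
    + a ^ 3 * ((α * g₁) ^ 3 + (β * g₂) ^ 3) * hw

/-- Two forms are non-proportional if neither is a scalar multiple of the other. -/
def NonProp {n : ℕ} (f g : MvPolynomial (Fin n) ℂ) : Prop :=
  (∀ c : ℂ, g ≠ c • f) ∧ (∀ c : ℂ, f ≠ c • g)

lemma aux_np {n : ℕ} {g₁ g₂ : MvPolynomial (Fin n) ℂ} (h : NonProp g₁ g₂) {u v : ℂ}
    (huv : C u * g₁ = C v * g₂) : u = 0 ∧ v = 0 := by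
  by_cases hu : u = 0
  · subst hu
    refine ⟨rfl, ?_⟩
    by_contra hv
    have hg2 : g₂ = 0 := by
      have h0 : C v * g₂ = 0 := by rw [← huv]; simp
      rcases mul_eq_zero.mp h0 with h' | h'
      · exact absurd h' (by simpa using hv)
      · exact h'
    exact h.1 0 (by simp [hg2])
  · exfalso
    apply h.2 (v / u)
    have : g₁ = C (v / u) * g₂ := by
      have := congrArg (fun q => C u⁻¹ * q) huv
      rw [← mul_assoc, ← map_mul, ← mul_assoc, ← map_mul, inv_mul_cancel₀ hu] at this
      simpa [div_eq_inv_mul] using this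
    rw [this, smul_eq_C_mul]

set_option maxHeartbeats 1600000 in
theorem stmt_17 {n : ℕ} (r : ℕ) (p : MvPolynomial (Fin n) ℂ)
    (hp : p.IsHomogeneous (3 * r)) :
    (∃ f₁ f₂ : MvPolynomial (Fin n) ℂ,
        f₁.IsHomogeneous r ∧ f₂.IsHomogeneous r ∧ NonProp f₁ f₂ ∧
        p = f₁^3 + f₂^3)
    ↔ (∃ g₁ g₂ g₃ : MvPolynomial (Fin n) ℂ,
        g₁.IsHomogeneous r ∧ g₂.IsHomogeneous r ∧ g₃.IsHomogeneous r ∧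
        NonProp g₁ g₂ ∧ NonProp g₁ g₃ ∧ NonProp g₂ g₃ ∧
        (∃ c₁ c₂ c₃ : ℂ, (c₁, c₂, c₃) ≠ (0, 0, 0) ∧
          c₁ • g₁ + c₂ • g₂ + c₃ • g₃ = 0) ∧
        p = g₁ * g₂ * g₃) := by
  constructor
  · rintro ⟨f₁, f₂, hf₁, hf₂, hnp, rfl⟩
    refine ⟨f₁ + f₂, f₁ + C om * f₂, f₁ + C (om ^ 2) * f₂,
      hf₁.add hf₂, hf₁.add (hf₂.C_mul _), hf₁.add (hf₂.C_mul _), ?_, ?_, ?_, ?_, ?_⟩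
    · constructor
      · intro c hc
        rw [smul_eq_C_mul] at hc
        try rw [map_pow] at hc
        have key : C (1 - c) * f₁ = C (c - om) * f₂ := by
          simp only [map_sub, map_one]
          linear_combination hc
        obtain ⟨h1, h2⟩ := aux_np hnp key
        have hc1 : c = 1 := by linear_combination -h1
        rw [hc1] at h2
        exact om_ne_one (by linear_combination -h2)
      · intro c hc
        rw [smul_eq_C_mul] at hc
        try rw [map_pow] at hc
        have key : C (1 - c) * f₁ = C (c * om - 1) * f₂ := by
          simp only [map_sub, map_one, map_mul]
          linear_combination hc
        obtain ⟨h1, h2⟩ := aux_np hnp key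
        have hc1 : c = 1 := by linear_combination -h1
        rw [hc1] at h2
        exact om_ne_one (by linear_combination h2)
    · constructor
      · intro c hc
        rw [smul_eq_C_mul] at hc
        try rw [map_pow] at hc
        have key : C (1 - c) * f₁ = C (c - om ^ 2) * f₂ := by
          simp only [map_sub, map_one, map_pow]
          linear_combination hc
        obtain ⟨h1, h2⟩ := aux_np hnp key
        have hc1 : c = 1 := by linear_combination -h1
        rw [hc1] at h2
        exact om_sq_ne_one (by linear_combination -h2)
      · intro c hc
        rw [smul_eq_C_mul] at hc
        try rw [map_pow] at hc
        have key : C (1 - c) * f₁ = C (c * om ^ 2 - 1) * f₂ := by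
          simp only [map_sub, map_one, map_mul, map_pow]
          linear_combination hc
        obtain ⟨h1, h2⟩ := aux_np hnp key
        have hc1 : c = 1 := by linear_combination -h1
        rw [hc1] at h2
        exact om_sq_ne_one (by linear_combination h2)
    · constructor
      · intro c hc
        rw [smul_eq_C_mul] at hc
        try rw [map_pow] at hc
        have key : C (1 - c) * f₁ = C (c * om - om ^ 2) * f₂ := by
          simp only [map_sub, map_one, map_mul, map_pow]
          linear_combination hc
        obtain ⟨h1, h2⟩ := aux_np hnp key
        have hc1 : c = 1 := by linear_combination -h1
        rw [hc1] at h2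
        exact om_ne_om_sq (by linear_combination h2)
      · intro c hc
        rw [smul_eq_C_mul] at hc
        try rw [map_pow] at hc
        have key : C (1 - c) * f₁ = C (c * om ^ 2 - om) * f₂ := by
          simp only [map_sub, map_one, map_mul, map_pow]
          linear_combination hc
        obtain ⟨h1, h2⟩ := aux_np hnp key
        have hc1 : c = 1 := by linear_combination -h1
        rw [hc1] at h2
        exact om_ne_om_sq (by linear_combination -h2)
    · refine ⟨1, om, om ^ 2, ?_, ?_⟩
      · simp only [ne_eq, Prod.mk.injEq, not_and]
        intro h; exact absurd h one_ne_zero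
      · simp only [smul_eq_C_mul, map_pow, map_one]
        have hC : (C om : MvPolynomial (Fin n) ℂ) ^ 2 + C om + 1 = 0 := by
          have := congrArg (C : ℂ → MvPolynomial (Fin n) ℂ) om_sq
          simpa using this
        linear_combination (f₁ + ((C om) ^ 2 - C om + 1) * f₂) * hC
    · have hC : (C om : MvPolynomial (Fin n) ℂ) ^ 2 + C om + 1 = 0 := by
        have := congrArg (C : ℂ → MvPolynomial (Fin n) ℂ) om_sq
        simpa using this
      rw [map_pow]
      exact cube_factor (C om : MvPolynomial (Fin n) ℂ) f₁ f₂ hC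
  · rintro ⟨g₁, g₂, g₃, hg₁, hg₂, hg₃, h12, h13, h23, ⟨c₁, c₂, c₃, hcne, hsum⟩, rfl⟩
    -- c₃ ≠ 0
    have hc₃ : c₃ ≠ 0 := by
      intro hc3
      subst hc3
      simp only [zero_smul, add_zero] at hsum
      by_cases hc1 : c₁ = 0
      · subst hc1
        simp only [zero_smul, zero_add] at hsum
        have hc2 : c₂ ≠ 0 := by
          intro h; exact hcne (by simp [h])
        have hg20 : g₂ = 0 := by
          rw [smul_eq_C_mul] at hsum
          rcases mul_eq_zero.mp hsum with h' | h'
          · exact absurd h' (by simpa using hc2)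
          · exact h'
        exact h12.1 0 (by simp [hg20])
      · apply h12.2 (-(c₂ / c₁))
        simp only [smul_eq_C_mul] at hsum ⊢
        have hne : (C c₁ : MvPolynomial (Fin n) ℂ) ≠ 0 := by simpa using hc1
        apply mul_left_cancel₀ hne
        rw [← mul_assoc, ← map_mul]
        have e : c₁ * -(c₂ / c₁) = -c₂ := by field_simp
        rw [e, map_neg]
        linear_combination hsum
    -- g₃ = α g₁ + β g₂
    set α : ℂ := -(c₁ / c₃) with hα_def
    set β : ℂ := -(c₂ / c₃) with hβ_def
    have hg3 : g₃ = C α * g₁ + C β * g₂ := by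
      have hC3 : (C c₃ : MvPolynomial (Fin n) ℂ) ≠ 0 := by simpa using hc₃
      apply mul_left_cancel₀ hC3
      rw [smul_eq_C_mul, smul_eq_C_mul, smul_eq_C_mul] at hsum
      have e1 : c₃ * α = -c₁ := by rw [hα_def]; field_simp
      have e2 : c₃ * β = -c₂ := by rw [hβ_def]; field_simp
      calc C c₃ * g₃ = -(C c₁ * g₁) - C c₂ * g₂ := by linear_combination hsum
        _ = C (c₃ * α) * g₁ + C (c₃ * β) * g₂ := by rw [e1, e2]; simp; ring
        _ = C c₃ * (C α * g₁ + C β * g₂) := by rw [map_mul, map_mul]; ring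
    have hαne : α ≠ 0 := by
      intro h
      apply h23.1 β
      rw [hg3, h, smul_eq_C_mul]
      simp
    have hβne : β ≠ 0 := by
      intro h
      apply h13.1 α
      rw [hg3, h, smul_eq_C_mul]
      simp
    have hden : 3 * (om - om ^ 2) * α * β ≠ 0 := by
      apply mul_ne_zero (mul_ne_zero (mul_ne_zero three_ne_zero ?_) hαne) hβne
      exact sub_ne_zero_of_ne om_ne_om_sq
    obtain ⟨a, ha3⟩ := Complex.isAlgClosed.exists_pow_nat_eq (3 * (om - om ^ 2) * α * β)⁻¹
      (by norm_num : 0 < 3)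
    have ha : a ^ 3 * (3 * (om - om ^ 2) * α * β) = 1 := by
      rw [ha3, inv_mul_cancel₀ hden]
    have ha0 : a ≠ 0 := by
      intro h
      rw [h] at ha
      simp at ha
    refine ⟨C a * (C om * (C α * g₁) - C β * g₂), C a * (-(C α * g₁) + C om * (C β * g₂)),
      ?_, ?_, ?_, ?_⟩
    · exact (((hg₁.C_mul _).C_mul _).sub (hg₂.C_mul _)).C_mul _
    · exact (((hg₁.C_mul _).neg).add ((hg₂.C_mul _).C_mul _)).C_mul _
    · constructor
      · intro c hc
        rw [smul_eq_C_mul] at hc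
        try rw [map_pow] at hc
        have key : C (a * α * (1 + c * om)) * g₁ = C (a * β * (om + c)) * g₂ := by
          simp only [map_mul, map_add, map_one]
          linear_combination -hc
        obtain ⟨h1, h2⟩ := aux_np h12 key
        have h1' : 1 + c * om = 0 := by
          rcases mul_eq_zero.mp h1 with h' | h'
          · exact absurd h' (mul_ne_zero ha0 hαne)
          · exact h'
        have h2' : om + c = 0 := by
          rcases mul_eq_zero.mp h2 with h' | h'
          · exact absurd h' (mul_ne_zero ha0 hβne)
          · exact h'
        exact om_sq_ne_one (by linear_combination -h1' + om * h2')
      · intro c hc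
        rw [smul_eq_C_mul] at hc
        try rw [map_pow] at hc
        have key : C (a * α * (om + c)) * g₁ = C (a * β * (1 + c * om)) * g₂ := by
          simp only [map_mul, map_add, map_one]
          linear_combination hc
        obtain ⟨h1, h2⟩ := aux_np h12 key
        have h1' : om + c = 0 := by
          rcases mul_eq_zero.mp h1 with h' | h'
          · exact absurd h' (mul_ne_zero ha0 hαne)
          · exact h'
        have h2' : 1 + c * om = 0 := by
          rcases mul_eq_zero.mp h2 with h' | h'
          · exact absurd h' (mul_ne_zero ha0 hβne)
          · exact h'
        exact om_sq_ne_one (by linear_combination -h2' + om * h1')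
    · have hCw : (C om : MvPolynomial (Fin n) ℂ) ^ 3 = 1 := by
        have := congrArg (C : ℂ → MvPolynomial (Fin n) ℂ) om_cube
        simpa using this
      have hCa : (C a : MvPolynomial (Fin n) ℂ) ^ 3
          * (3 * (C om - (C om) ^ 2) * C α * C β) = 1 := by
        have := congrArg (C : ℂ → MvPolynomial (Fin n) ℂ) ha
        simpa [map_mul, map_sub, map_pow, map_ofNat] using this
      rw [hg3]
      linear_combination -(g₁ * g₂ * (C α * g₁ + C β * g₂)) * hCa
        - (C a) ^ 3 * ((C α * g₁) ^ 3 + (C β * g₂) ^ 3) * hCw
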